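/- Monotone convergence of the C&CG bounds: in Algorithm 1, the sequence of lower bounds (LB) is nondecreasing across iterations (when master problems are solved to optimality), the sequence of upper bounds (UB) is nonincreasing, and LB ≤ optimal value ≤ UB at every iteration; consequently, if the support set S is finite with K elements, the algorithm terminates with LB = UB after at most K iterations. -/

import Mathlib

/-- Monotone convergence of the C&CG bounds: the lower bounds `LB n` produced by
masters solved to optimality over growing scenario subsets `T n ⊆ K` are
nondecreasing, the incumbent upper bounds `UB n` are nonincreasing,
`LB n ≤ opt ≤ UB n` at every iteration, and when the scenario set `K` is finite
the algorithm terminates with `LB = UB` after at most `K.card` iterations. -/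
theorem ccg_monotone_convergence {X ι : Type*} [DecidableEq ι]
    (K : Finset ι) (hK : K.Nonempty)
    (F : Set X) (ψ : X → ℝ) (c : X → ι → ℝ)
    (T : ℕ → Finset ι) (xs : ℕ → X) (sel : ℕ → ι)
    (hTne : ∀ n, (T n).Nonempty)
    (hTK : ∀ n, T n ⊆ K)
    (hTsucc : ∀ n, T (n + 1) = insert (sel n) (T n))
    (hfeas : ∀ n, xs n ∈ F)
    (hsel : ∀ n, sel n ∈ K ∧ ∀ i ∈ K, c (xs n) i ≤ c (xs n) (sel n))
    (hopt : ∀ n, ∀ x' ∈ F,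
      ψ (xs n) + (T n).sup' (hTne n) (c (xs n))
        ≤ ψ x' + (T n).sup' (hTne n) (c x'))
    (hbdd : BddBelow {v : ℝ | ∃ x ∈ F, v = ψ x + K.sup' hK (c x)})
    (LB UB : ℕ → ℝ) (opt : ℝ)
    (hLB : ∀ n, LB n = ψ (xs n) + (T n).sup' (hTne n) (c (xs n)))
    (hUB : ∀ n, UB n = (Finset.range (n + 1)).inf' Finset.nonempty_range_add_one
      (fun m => ψ (xs m) + K.sup' hK (c (xs m))))
    (hopt_def : opt = sInf {v : ℝ | ∃ x ∈ F, v = ψ x + K.sup' hK (c x)}) :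
    (∀ n, LB n ≤ LB (n + 1)) ∧
    (∀ n, UB (n + 1) ≤ UB n) ∧
    (∀ n, LB n ≤ opt ∧ opt ≤ UB n) ∧
    (∃ n ≤ K.card, LB n = UB n) := by
  have hTmono : ∀ n, T n ⊆ T (n + 1) := fun n => by
    rw [hTsucc n]; exact Finset.subset_insert _ _
  have hset_ne : {v : ℝ | ∃ x ∈ F, v = ψ x + K.sup' hK (c x)}.Nonempty :=
    ⟨_, xs 0, hfeas 0, rfl⟩
  have hLBopt : ∀ n, LB n ≤ opt := by
    intro n
    rw [hLB n, hopt_def]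
    apply le_csInf hset_ne
    rintro v ⟨x, hx, rfl⟩
    calc ψ (xs n) + (T n).sup' (hTne n) (c (xs n))
        ≤ ψ x + (T n).sup' (hTne n) (c x) := hopt n x hx
      _ ≤ ψ x + K.sup' hK (c x) :=
          add_le_add_right (Finset.sup'_mono (c x) (hTK n) (hTne n)) _
  have hUBopt : ∀ n, opt ≤ UB n := by
    intro n
    rw [hUB n, hopt_def]
    apply Finset.le_inf'
    intro m _
    exact csInf_le hbdd ⟨xs m, hfeas m, rfl⟩
  have hLBmono : ∀ n, LB n ≤ LB (n + 1) := by
    intro n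
    rw [hLB n, hLB (n + 1)]
    calc ψ (xs n) + (T n).sup' (hTne n) (c (xs n))
        ≤ ψ (xs (n + 1)) + (T n).sup' (hTne n) (c (xs (n + 1))) :=
          hopt n _ (hfeas (n + 1))
      _ ≤ ψ (xs (n + 1)) + (T (n + 1)).sup' (hTne (n + 1)) (c (xs (n + 1))) :=
          add_le_add_right (Finset.sup'_mono _ (hTmono n) (hTne n)) _
  have hUBmono : ∀ n, UB (n + 1) ≤ UB n := by
    intro n
    rw [hUB n, hUB (n + 1)]
    apply Finset.le_inf'
    intro m hm
    exact Finset.inf'_le _ (Finset.mem_range.mpr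
      (lt_trans (Finset.mem_range.mp hm) (Nat.lt_succ_self _)))
  have hcard : ∀ n, (∀ m < n, sel m ∉ T m) → n + 1 ≤ (T n).card := by
    intro n
    induction n with
    | zero => intro _; exact (hTne 0).card_pos
    | succ k ih =>
      intro h
      have h1 := ih (fun m hm => h m (hm.trans (Nat.lt_succ_self k)))
      have h2 : (T (k + 1)).card = (T k).card + 1 := by
        rw [hTsucc k, Finset.card_insert_of_notMem (h k (Nat.lt_succ_self k))]
      omega
  have hterm : ∃ n ≤ K.card, sel n ∈ T n := by
    by_contra hcon
    push_neg at hcon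
    have h1 := hcard K.card (fun m hm => hcon m hm.le)
    have h2 := Finset.card_le_card (hTK K.card)
    omega
  obtain ⟨n, hn, hsel_in⟩ := hterm
  refine ⟨hLBmono, hUBmono, fun n => ⟨hLBopt n, hUBopt n⟩, n, hn, ?_⟩
  have hsupeq : (T n).sup' (hTne n) (c (xs n)) = K.sup' hK (c (xs n)) := by
    apply le_antisymm
    · exact Finset.sup'_mono _ (hTK n) _
    · apply Finset.sup'_le
      intro i hi
      exact le_trans ((hsel n).2 i hi) (Finset.le_sup' _ hsel_in)
  have hUBle : UB n ≤ LB n := by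
    rw [hUB n, hLB n, hsupeq]
    exact Finset.inf'_le _ (Finset.mem_range.mpr (Nat.lt_succ_self n))
  exact le_antisymm (le_trans (hLBopt n) (hUBopt n)) hUBle
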